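/- An integral domain R is a Prüfer domain if and only if the Elementwise Chinese Remainder Theorem holds over R: for any elements x₁, ..., xₙ ∈ R and ideals I₁, ..., Iₙ of R, the system of congruences x ≡ xⱼ mod Iⱼ (for 1 ≤ j ≤ n) has a solution in R if and only if xⱼ − xₖ ∈ Iⱼ + Iₖ for all j, k. -/

import Mathlib

set_option linter.unusedSectionVars false

/-- A Prüfer domain: every nonzero finitely generated ideal is invertible. -/
def IsPruferDomain (R : Type*) [CommRing R] [IsDomain R] : Prop :=
  ∀ I : Ideal R, I ≠ ⊥ → I.FG →
    IsUnit (I : FractionalIdeal (nonZeroDivisors R) (FractionRing R))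

section Aux

variable {R : Type*} [CommRing R] [IsDomain R]

/-- pairwise condition -/
def PairCond (R : Type*) [CommRing R] : Prop :=
  ∀ a b : R, ∃ u v : R, u + v = 1 ∧ u * b ∈ Ideal.span {a} ∧ v * a ∈ Ideal.span {b}

open FractionalIdeal

theorem prufer_to_cond (h : ∀ I : Ideal R, I ≠ ⊥ → I.FG →
    IsUnit (I : FractionalIdeal (nonZeroDivisors R) (FractionRing R))) : PairCond R := by
  intro a b
  rcases eq_or_ne a 0 with rfl | ha
  · exact ⟨0, 1, by ring, by simp, by simp⟩
  rcases eq_or_ne b 0 with rfl | hb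
  · exact ⟨1, 0, by ring, by simp, by simp⟩
  set K := FractionRing R
  have hI : (Ideal.span {a, b} : Ideal R) ≠ ⊥ := by
    simp only [ne_eq, Ideal.span_eq_bot]
    intro hall; exact ha (hall a (by simp))
  obtain ⟨J, hJ⟩ := (h _ hI (Submodule.fg_span ((Set.finite_singleton b).insert a))).exists_right_inv
  have hcoe : ((Ideal.span {a, b} : Ideal R) : FractionalIdeal (nonZeroDivisors R) K)
      = spanSingleton _ (algebraMap R K a) + spanSingleton _ (algebraMap R K b) := by
    rw [Ideal.span_insert, coeIdeal_sup, coeIdeal_span_singleton, coeIdeal_span_singleton]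
  have h1 : (1 : K) ∈ spanSingleton (nonZeroDivisors R) (algebraMap R K a) * J
      + spanSingleton (nonZeroDivisors R) (algebraMap R K b) * J := by
    rw [← add_mul, ← hcoe, hJ]
    simpa using FractionalIdeal.coe_mem_one (nonZeroDivisors R) 1
  rw [mem_add] at h1
  obtain ⟨i1, hi1, j1, hj1, hsum⟩ := h1
  rw [mem_singleton_mul] at hi1 hj1
  obtain ⟨p, hp, rfl⟩ := hi1
  obtain ⟨q, hq, rfl⟩ := hj1
  -- a*p = algebraMap u ; b*p ∈ R ; a*q ∈ R ; b*q = algebraMap v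
  have hmem : ∀ x ∈ J, ∀ c : R, c ∈ Ideal.span ({a,b} : Set R) →
      ∃ r : R, algebraMap R K c * x = algebraMap R K r := by
    intro x hx c hc
    have : algebraMap R K c * x ∈ (1 : FractionalIdeal (nonZeroDivisors R) K) := by
      rw [← hJ]
      exact FractionalIdeal.mul_mem_mul ((FractionalIdeal.mem_coeIdeal _).2 ⟨c, hc, rfl⟩) hx
    obtain ⟨r, hr⟩ := (FractionalIdeal.mem_one_iff _).1 this
    exact ⟨r, hr.symm⟩
  have hamem : a ∈ Ideal.span ({a,b} : Set R) := Ideal.subset_span (by simp)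
  have hbmem : b ∈ Ideal.span ({a,b} : Set R) := Ideal.subset_span (by simp)
  obtain ⟨u, hu⟩ := hmem p hp a hamem
  obtain ⟨t, ht⟩ := hmem p hp b hbmem
  obtain ⟨s, hs⟩ := hmem q hq a hamem
  obtain ⟨v, hv⟩ := hmem q hq b hbmem
  have hinj : Function.Injective (algebraMap R K) := IsFractionRing.injective R K
  refine ⟨u, v, ?_, ?_, ?_⟩
  · apply hinj
    rw [_root_.map_add, _root_.map_one, ← hu, ← hv, hsum]
  · rw [Ideal.mem_span_singleton']
    refine ⟨t, hinj ?_⟩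
    rw [_root_.map_mul, _root_.map_mul, ← ht, ← hu]; ring
  · rw [Ideal.mem_span_singleton']
    refine ⟨s, hinj ?_⟩
    rw [_root_.map_mul, _root_.map_mul, ← hs, ← hv]; ring

theorem cond_to_distrib (h : PairCond R) (I J K : Ideal R) :
    (I + J) ⊓ (I + K) = I + J ⊓ K := by
  refine le_antisymm ?_ (le_inf (add_le_add le_rfl inf_le_left) (add_le_add le_rfl inf_le_right))
  intro x hx
  obtain ⟨i, hi, j, hj, rfl⟩ := Submodule.mem_sup.1 (hx.1 : _ ∈ I ⊔ J)
  obtain ⟨i', hi', k, hk, hik⟩ := Submodule.mem_sup.1 (hx.2 : _ ∈ I ⊔ K)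
  obtain ⟨u, v, huv, hu, hv⟩ := h j k
  obtain ⟨t, ht⟩ := Ideal.mem_span_singleton'.1 hu
  obtain ⟨s, hs⟩ := Ideal.mem_span_singleton'.1 hv
  rw [Submodule.add_eq_sup, Submodule.mem_sup]
  refine ⟨i + u * (i' - i), ?_, u * k + v * j, ⟨?_, ?_⟩, ?_⟩
  · exact add_mem hi (Ideal.mul_mem_left _ _ (sub_mem hi' hi))
  · exact add_mem (ht ▸ Ideal.mul_mem_left _ t hj) (Ideal.mul_mem_left _ _ hj)
  · exact add_mem (Ideal.mul_mem_left _ _ hk) (hs ▸ Ideal.mul_mem_left _ s hk)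
  · have hik' : i' - i = j - k := by linear_combination hik
    have huk : u * k = u * j - u * (i' - i) := by rw [hik']; ring
    rw [huk]
    linear_combination (j : R) * huv

theorem myInf_split {m : ℕ} (f : Fin (m + 1) → Ideal R) :
    ⨅ i, f i = (⨅ i : Fin m, f i.castSucc) ⊓ f (Fin.last m) := by
  refine le_antisymm (le_inf (le_iInf fun i => iInf_le _ _) (iInf_le _ _)) (le_iInf fun i => ?_)
  induction i using Fin.lastCases with
  | last => exact inf_le_right
  | cast j => exact inf_le_left.trans (iInf_le _ j)

theorem cond_inf_add (h : PairCond R) :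
    ∀ (m : ℕ) (J : Fin m → Ideal R) (K : Ideal R), (⨅ i, J i) + K = ⨅ i, (J i + K) := by
  intro m
  induction m with
  | zero => intro J K; rw [iInf_of_empty, iInf_of_empty, Submodule.add_eq_sup, top_sup_eq]
  | succ m ih =>
    intro J K
    rw [myInf_split J, myInf_split (fun i => J i + K), ← ih (fun i => J i.castSucc) K]
    have := cond_to_distrib h K (⨅ i : Fin m, J i.castSucc) (J (Fin.last m))
    rw [add_comm ((⨅ i : Fin m, J i.castSucc) ⊓ J (Fin.last m)) K, ← this,
      add_comm K (⨅ i : Fin m, J i.castSucc), add_comm K (J (Fin.last m))]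

theorem cond_to_CRT (h : PairCond R) :
    ∀ (n : ℕ) (x : Fin n → R) (I : Fin n → Ideal R),
      (∀ j k, x j - x k ∈ I j + I k) → ∃ y : R, ∀ j, y - x j ∈ I j := by
  intro n
  induction n with
  | zero => exact fun x I _ => ⟨0, fun j => j.elim0⟩
  | succ n ih =>
    intro x I hcomp
    obtain ⟨y, hy⟩ := ih (fun j => x j.castSucc) (fun j => I j.castSucc)
      (fun j k => hcomp j.castSucc k.castSucc)
    have key : y - x (Fin.last n) ∈ (⨅ j : Fin n, I j.castSucc) + I (Fin.last n) := by
      rw [cond_inf_add h]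
      refine Submodule.mem_iInf _ |>.2 fun j => ?_
      have : y - x (Fin.last n) = (y - x j.castSucc) + (x j.castSucc - x (Fin.last n)) := by ring
      rw [this]
      exact add_mem (Submodule.mem_sup_left (hy j)) (hcomp j.castSucc (Fin.last n))
    rw [Submodule.add_eq_sup] at key
    obtain ⟨c, hc, d, hd, hcd⟩ := Submodule.mem_sup.1 key
    refine ⟨y - c, fun j => ?_⟩
    induction j using Fin.lastCases with
    | last =>
      have : y - c - x (Fin.last n) = d := by linear_combination -hcd
      rw [this]; exact hd
    | cast j =>
      have : y - c - x j.castSucc = (y - x j.castSucc) - c := by ring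
      rw [this]
      exact sub_mem (hy j) ((Submodule.mem_iInf _).1 hc j)

theorem crt_to_cond
    (hCRT : ∀ (n : ℕ) (x : Fin n → R) (I : Fin n → Ideal R),
      (∃ y : R, ∀ j, y - x j ∈ I j) ↔ ∀ j k, x j - x k ∈ I j + I k) : PairCond R := by
  have dist : ∀ I J K : Ideal R, (I + J) ⊓ (I + K) = I + J ⊓ K := by
    intro I J K
    refine le_antisymm ?_ (le_inf (add_le_add le_rfl inf_le_left) (add_le_add le_rfl inf_le_right))
    intro x hx
    have hx1 : x ∈ I + J := hx.1
    have hx2 : x ∈ I + K := hx.2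
    have compat : ∀ j k : Fin 3, (![x, 0, 0]) j - (![x, 0, 0]) k ∈ (![I, J, K]) j + (![I, J, K]) k := by
      intro j k
      fin_cases j <;> fin_cases k <;>
        simp only [show ((⟨2, by norm_num⟩ : Fin 3) : Fin 3) = 2 from rfl,
          Matrix.cons_val_zero, Matrix.cons_val_one, Matrix.head_cons,
          Fin.mk_one, Fin.mk_zero, Matrix.cons_val_two, Matrix.tail_cons, sub_self, sub_zero,
          zero_sub] <;>
        first
          | exact zero_mem _
          | exact hx1
          | exact hx2
          | (rw [add_comm]; exact neg_mem hx1)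
          | (rw [add_comm]; exact neg_mem hx2)
    obtain ⟨y, hy⟩ := (hCRT 3 ![x, 0, 0] ![I, J, K]).2 compat
    have h0 := hy 0
    have h1 := hy 1
    have h2 := hy 2
    simp only [Matrix.cons_val_zero, Matrix.cons_val_one, Matrix.head_cons, Fin.mk_one,
      Matrix.cons_val_two, Matrix.tail_cons, sub_zero] at h0 h1 h2
    have : x = (x - y) + y := by ring
    rw [this, Submodule.add_eq_sup]
    exact Submodule.mem_sup.2 ⟨x - y, by simpa using neg_mem h0, y, ⟨h1, h2⟩, rfl⟩
  have dist' : ∀ I J K : Ideal R, (J ⊓ I) + (J ⊓ K) = J ⊓ (I + K) := by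
    intro I J K
    have e1 : (J ⊓ K) + (J ⊓ I) = ((J ⊓ K) + J) ⊓ ((J ⊓ K) + I) := (dist (J ⊓ K) J I).symm
    have e2 : (J ⊓ K) + J = J := by
      rw [Submodule.add_eq_sup]; exact sup_eq_right.2 inf_le_left
    have e3 : (J ⊓ K) + I = (I + J) ⊓ (I + K) := by
      rw [add_comm]; exact (dist I J K).symm
    have e4 : J ⊓ ((I + J) ⊓ (I + K)) = J ⊓ (I + K) := by
      rw [← inf_assoc]
      congr 1
      exact inf_eq_left.2 (by rw [Submodule.add_eq_sup]; exact le_sup_right)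
    rw [add_comm, e1, e2, e3, e4]
  intro a b
  have hb : b ∈ (Ideal.span {b} ⊓ Ideal.span {a}) + (Ideal.span {b} ⊓ Ideal.span {a + b}) := by
    rw [dist' (Ideal.span {a}) (Ideal.span {b}) (Ideal.span {a + b})]
    refine ⟨Ideal.mem_span_singleton_self b, ?_⟩
    rw [Submodule.add_eq_sup]
    exact Submodule.mem_sup.2 ⟨-a, neg_mem (Ideal.mem_span_singleton_self a),
      a + b, Ideal.mem_span_singleton_self _, by ring⟩
  rw [Submodule.add_eq_sup] at hb
  obtain ⟨c, hc, d, hd, hcd⟩ := Submodule.mem_sup.1 hb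
  obtain ⟨r, hr⟩ := Ideal.mem_span_singleton'.1 hd.2
  refine ⟨1 - r, r, by ring, ?_, ?_⟩
  · have : (1 - r) * b = c + r * a := by linear_combination -hcd - hr
    rw [this]
    exact add_mem hc.2 (Ideal.mul_mem_left _ _ (Ideal.mem_span_singleton_self a))
  · have : r * a = d - r * b := by linear_combination hr
    rw [this]
    exact sub_mem hd.1 (Ideal.mul_mem_left _ _ (Ideal.mem_span_singleton_self b))

theorem tri_ident (A B C : Ideal R) :
    (A + B) * ((B + C) * (C + A)) = (A + B + C) * (B * C + (C * A + A * B)) := by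
  have h2 : (2 : Ideal R) = 1 := by
    rw [← one_add_one_eq_two, Submodule.add_eq_sup, sup_idem]
  have h3 : (3 : Ideal R) = 1 := by
    rw [show (3 : Ideal R) = 1 + 1 + 1 by norm_num, Submodule.add_eq_sup, Submodule.add_eq_sup,
      sup_idem, sup_idem]
  ring_nf
  rw [h2, h3]

theorem cond_pair_unit (h : PairCond R) {a : R} (b : R) (ha : a ≠ 0) :
    IsUnit ((Ideal.span {a, b} : Ideal R) : FractionalIdeal (nonZeroDivisors R) (FractionRing R)) := by
  obtain ⟨u, v, huv, hu, hv⟩ := h a b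
  obtain ⟨t, ht⟩ := Ideal.mem_span_singleton'.1 hu
  obtain ⟨s, hs⟩ := Ideal.mem_span_singleton'.1 hv
  set K := FractionRing R
  have hinj : Function.Injective (algebraMap R K) := IsFractionRing.injective R K
  have ha' : algebraMap R K a ≠ 0 := fun hz => ha (hinj (by rw [hz, _root_.map_zero]))
  set p : K := algebraMap R K u / algebraMap R K a with hp
  set q : K := algebraMap R K s / algebraMap R K a with hq
  have e1 : algebraMap R K a * p = algebraMap R K u := by
    rw [hp, mul_div_assoc', mul_div_cancel_left₀ _ ha']
  have e2 : algebraMap R K a * q = algebraMap R K s := by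
    rw [hq, mul_div_assoc', mul_div_cancel_left₀ _ ha']
  have e3 : algebraMap R K b * p = algebraMap R K t := by
    rw [hp, ← mul_div_assoc, div_eq_iff ha']
    rw [← _root_.map_mul, ← _root_.map_mul]
    exact congrArg _ (by linear_combination -ht)
  have e4 : algebraMap R K b * q = algebraMap R K v := by
    rw [hq, ← mul_div_assoc, div_eq_iff ha']
    rw [← _root_.map_mul, ← _root_.map_mul]
    exact congrArg _ (by linear_combination hs)
  have hcoe : ((Ideal.span {a, b} : Ideal R) : FractionalIdeal (nonZeroDivisors R) K)
      = spanSingleton _ (algebraMap R K a) + spanSingleton _ (algebraMap R K b) := by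
    rw [Ideal.span_insert, coeIdeal_sup, coeIdeal_span_singleton, coeIdeal_span_singleton]
  have hcoe2 : ((Ideal.span {u, t, s, v} : Ideal R) : FractionalIdeal (nonZeroDivisors R) K)
      = spanSingleton _ (algebraMap R K u) + (spanSingleton _ (algebraMap R K t)
        + (spanSingleton _ (algebraMap R K s) + spanSingleton _ (algebraMap R K v))) := by
    rw [Ideal.span_insert, Ideal.span_insert, Ideal.span_insert, coeIdeal_sup, coeIdeal_sup,
      coeIdeal_sup, coeIdeal_span_singleton, coeIdeal_span_singleton, coeIdeal_span_singleton,
      coeIdeal_span_singleton]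
  have htop : (Ideal.span {u, t, s, v} : Ideal R) = ⊤ := by
    rw [Ideal.eq_top_iff_one]
    have : (1 : R) = u + v := huv.symm
    rw [this]
    exact add_mem (Ideal.subset_span (by simp)) (Ideal.subset_span (by simp))
  refine IsUnit.of_mul_eq_one (spanSingleton _ p + spanSingleton _ q) ?_
  rw [hcoe, mul_add, add_mul, add_mul, spanSingleton_mul_spanSingleton,
    spanSingleton_mul_spanSingleton, spanSingleton_mul_spanSingleton,
    spanSingleton_mul_spanSingleton, e1, e2, e3, e4]
  calc spanSingleton (nonZeroDivisors R) (algebraMap R K u)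
        + spanSingleton _ (algebraMap R K t)
      + (spanSingleton _ (algebraMap R K s) + spanSingleton _ (algebraMap R K v))
      = ((Ideal.span {u, t, s, v} : Ideal R) : FractionalIdeal (nonZeroDivisors R) K) := by
        rw [hcoe2]; ring
    _ = 1 := by rw [htop, coeIdeal_top]

theorem cond_span_unit (h : PairCond R) :
    ∀ (n : ℕ) (s : Finset R), s.card ≤ n → Ideal.span (s : Set R) ≠ ⊥ →
      IsUnit ((Ideal.span (s : Set R) : Ideal R) :
        FractionalIdeal (nonZeroDivisors R) (FractionRing R)) := by
  intro n
  induction n with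
  | zero =>
    intro s hcard hne
    rw [Nat.le_zero, Finset.card_eq_zero] at hcard
    subst hcard
    simp at hne
  | succ n ih =>
    intro s hcard hne
    classical
    by_cases h0 : (0 : R) ∈ s
    · have hspan : Ideal.span ((s.erase 0 : Finset R) : Set R) = Ideal.span (s : Set R) := by
        conv_rhs => rw [← Finset.insert_erase h0]
        rw [Finset.coe_insert]
        exact Submodule.span_insert_zero.symm
      have hc : (s.erase 0).card ≤ n := by
        have := Finset.card_erase_of_mem h0
        omega
      rw [← hspan]
      exact ih _ hc (by rw [hspan]; exact hne)
    · obtain ⟨a, ha⟩ : s.Nonempty := by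
        rcases s.eq_empty_or_nonempty with rfl | hs
        · simp at hne
        · exact hs
      have ha0 : a ≠ 0 := fun hz => h0 (hz ▸ ha)
      set s' := s.erase a with hs'def
      have hins : insert a s' = s := Finset.insert_erase ha
      by_cases hs'e : s' = ∅
      · have : (s : Set R) = {a} := by
          rw [← hins, hs'e]; simp
        rw [this]
        have : ({a} : Set R) = {a, a} := by simp
        rw [this]
        exact cond_pair_unit h a ha0
      · obtain ⟨b, hb⟩ := Finset.nonempty_iff_ne_empty.2 hs'e
        have hb0 : b ≠ 0 := fun hz => h0 (hz ▸ Finset.mem_of_mem_erase hb)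
        set s'' := s'.erase b with hs''def
        have hins' : insert b s'' = s' := Finset.insert_erase hb
        set A := Ideal.span ({a} : Set R) with hA
        set B := Ideal.span ({b} : Set R) with hB
        set C := Ideal.span ((s'' : Finset R) : Set R) with hC
        have hABC : A + B + C = Ideal.span (s : Set R) := by
          rw [← hins, ← hins', Finset.coe_insert, Finset.coe_insert, Ideal.span_insert,
            Ideal.span_insert, hA, hB, hC, Submodule.add_eq_sup, Submodule.add_eq_sup, sup_assoc]
        have hAB : A + B = Ideal.span ({a, b} : Set R) := by
          rw [Ideal.span_insert, Submodule.add_eq_sup]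
        have hBC : B + C = Ideal.span ((s' : Finset R) : Set R) := by
          rw [← hins', Finset.coe_insert, Ideal.span_insert, Submodule.add_eq_sup]
        have hCA : C + A = Ideal.span ((insert a s'' : Finset R) : Set R) := by
          rw [Finset.coe_insert, Ideal.span_insert, Submodule.add_eq_sup, sup_comm]
        have hc1 : s'.card = s.card - 1 := by rw [hs'def]; exact Finset.card_erase_of_mem ha
        have hc2 : s''.card = s'.card - 1 := by rw [hs''def]; exact Finset.card_erase_of_mem hb
        have hpos : 0 < s.card := Finset.card_pos.2 ⟨a, ha⟩
        have hpos' : 0 < s'.card := Finset.card_pos.2 ⟨b, hb⟩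
        have hcards : s'.card ≤ n := by omega
        have hcards' : (insert a s'').card ≤ n := by
          have h1 := Finset.card_insert_le a s''
          omega
        have hUab : IsUnit ((A + B : Ideal R) :
            FractionalIdeal (nonZeroDivisors R) (FractionRing R)) := by
          rw [hAB]
          exact cond_pair_unit h b ha0
        have hUbc : IsUnit ((B + C : Ideal R) :
            FractionalIdeal (nonZeroDivisors R) (FractionRing R)) := by
          rw [hBC]
          refine ih s' hcards fun hbot => hb0 ?_
          exact (Ideal.span_eq_bot.1 hbot) b (by exact_mod_cast hb)
        have hUca : IsUnit ((C + A : Ideal R) :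
            FractionalIdeal (nonZeroDivisors R) (FractionRing R)) := by
          rw [hCA]
          refine ih _ hcards' fun hbot => ha0 ?_
          exact (Ideal.span_eq_bot.1 hbot) a (by simp)
        have hprod : IsUnit (((A + B) * ((B + C) * (C + A)) : Ideal R) :
            FractionalIdeal (nonZeroDivisors R) (FractionRing R)) := by
          rw [coeIdeal_mul, coeIdeal_mul]
          exact hUab.mul (hUbc.mul hUca)
        rw [tri_ident, hABC, coeIdeal_mul] at hprod
        exact isUnit_of_mul_isUnit_left hprod

end Aux

theorem prufer_iff_elementwise_CRT (R : Type*) [CommRing R] [IsDomain R] :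
    IsPruferDomain R ↔
      ∀ (n : ℕ) (x : Fin n → R) (I : Fin n → Ideal R),
        (∃ y : R, ∀ j, y - x j ∈ I j) ↔ ∀ j k, x j - x k ∈ I j + I k := by
  constructor
  · intro hP n x I
    have hP' : ∀ I : Ideal R, I ≠ ⊥ → I.FG →
        IsUnit (I : FractionalIdeal (nonZeroDivisors R) (FractionRing R)) := hP
    constructor
    · rintro ⟨y, hy⟩ j k
      have : x j - x k = (y - x k) - (y - x j) := by ring
      rw [this]
      exact sub_mem (Submodule.mem_sup_right (hy k)) (Submodule.mem_sup_left (hy j))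
    · exact fun hcomp => cond_to_CRT (prufer_to_cond hP') n x I hcomp
  · intro hCRT I hI hFG
    obtain ⟨s, hs⟩ := hFG
    have hs' : Ideal.span ((s : Finset R) : Set R) = I := by
      rw [← Ideal.submodule_span_eq]; exact hs
    rw [← hs']
    exact cond_span_unit (crt_to_cond hCRT) s.card s le_rfl (by rw [hs']; exact hI)
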